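/- For any y ∈ V and L > 0, writing p := p_L(y), x(p) for the corresponding primal vector, and z(p) := v_L(y), the primal-dual gap of the constrained reformulation satisfies f(x(p)) + g(z(p)) − q(p) ≤ (L + L_F)·‖p‖·‖p − y‖. -/

import Mathlib

open scoped RealInnerProductSpace

/-- If `a ≤ b + t * c` for all `t ∈ (0,1)`, then `a ≤ b`. -/
lemma limit_aux_pd {a b c : ℝ} (h : ∀ t : ℝ, 0 < t → t < 1 → a ≤ b + t * c) : a ≤ b := by
  rcases le_or_gt c 0 with hc | hc
  · have h2 := h (1/2) (by norm_num) (by norm_num)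
    nlinarith
  · by_contra hab
    push_neg at hab
    have hab' : 0 < a - b := by linarith
    set t : ℝ := min (1/2) ((a - b)/(2*c)) with ht
    have ht0 : 0 < t := lt_min (by norm_num) (div_pos hab' (by linarith))
    have ht1 : t < 1 := lt_of_le_of_lt (min_le_left _ _) (by norm_num)
    have h3 := h t ht0 ht1
    have h4 : t ≤ (a - b)/(2*c) := min_le_right _ _
    have h5 : t * c ≤ (a - b)/2 := by
      have := mul_le_mul_of_nonneg_right h4 hc.le
      calc t * c ≤ ((a - b)/(2*c)) * c := this
        _ = (a - b)/2 := by field_simp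
    linarith

/-- Quadratic growth at the maximizer of `x ↦ ⟪c,x⟫ - f x` for `σ`-strongly convex `f`. -/
lemma sc_growth_pd {E : Type*} [NormedAddCommGroup E] [InnerProductSpace ℝ E]
    {σ : ℝ} {f : E → ℝ} (hf : StrongConvexOn Set.univ σ f) (c : E)
    {xs : E} (hmax : IsMaxOn (fun x => ⟪c, x⟫ - f x) Set.univ xs) (x : E) :
    f xs - ⟪c, xs⟫ + σ/2 * ‖xs - x‖^2 ≤ f x - ⟪c, x⟫ := by
  apply limit_aux_pd (c := σ/2 * ‖xs - x‖^2)
  intro t ht0 ht1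
  have hconv := hf.2 (Set.mem_univ xs) (Set.mem_univ x)
    (show (0:ℝ) ≤ 1 - t by linarith) ht0.le (show (1 - t) + t = 1 by ring)
  have hmax' := hmax (Set.mem_univ ((1 - t) • xs + t • x))
  simp only [smul_eq_mul] at hconv
  have hinner : ⟪c, (1 - t) • xs + t • x⟫ = (1 - t) * ⟪c, xs⟫ + t * ⟪c, x⟫ := by
    rw [inner_add_right, real_inner_smul_right, real_inner_smul_right]
  simp only [Set.mem_setOf_eq] at hmax'
  have key : t * (f xs - ⟪c, xs⟫ + (1 - t) * (σ/2 * ‖xs - x‖^2))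
      ≤ t * (f x - ⟪c, x⟫) := by nlinarith [hmax', hconv, hinner]
  have := (mul_le_mul_iff_right₀ ht0).mp key
  nlinarith

/-- Optimality inequality for the proximal minimizer. -/
lemma prox_opt_pd {V : Type*} [NormedAddCommGroup V] [InnerProductSpace ℝ V]
    {L : ℝ} (hL : 0 < L) {g : V → ℝ} (hg : ConvexOn ℝ Set.univ g) (c : V) {vz : V}
    (hmin : IsMinOn (fun z => L * g z + (1/2) * ‖z - c‖^2) Set.univ vz) (z : V) :
    L * g vz ≤ L * g z + ⟪vz - c, z - vz⟫ := by
  apply limit_aux_pd (c := (1/2) * ‖z - vz‖^2)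
  intro t ht0 ht1
  have hmin' := hmin (Set.mem_univ ((1 - t) • vz + t • z))
  have hconv := hg.2 (Set.mem_univ vz) (Set.mem_univ z)
    (show (0:ℝ) ≤ 1 - t by linarith) ht0.le (show (1 - t) + t = 1 by ring)
  simp only [smul_eq_mul] at hconv
  have hpt : (1 - t) • vz + t • z - c = (vz - c) + t • (z - vz) := by
    rw [sub_smul, smul_sub, one_smul]; abel
  have hnorm : ‖(1 - t) • vz + t • z - c‖^2
      = ‖vz - c‖^2 + 2*(t*⟪vz - c, z - vz⟫) + t^2*‖z - vz‖^2 := by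
    rw [hpt, norm_add_sq_real, real_inner_smul_right, norm_smul]
    rw [Real.norm_eq_abs, abs_of_pos ht0]
    ring
  simp only [Set.mem_setOf_eq] at hmin'
  have key : t * (L * g vz)
      ≤ t * (L * g z + ⟪vz - c, z - vz⟫ + t * ((1/2) * ‖z - vz‖^2)) := by
    nlinarith [hmin', hconv, hnorm]
  have := (mul_le_mul_iff_right₀ ht0).mp key
  linarith

/-- For any `y ∈ V` and `L > 0`, writing `p := p_L(y)`, `x(p)` for the
corresponding primal vector, and `z(p) := v_L(y)`, the primal-dual gap of the constrained
reformulation satisfies `f(x(p)) + g(z(p)) − q(p) ≤ (L + L_F)·‖p‖·‖p − y‖`,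
where `L_F := ‖A‖²/σ`. -/
theorem primal_dual_gap_constrained
    {E V : Type*} [NormedAddCommGroup E] [InnerProductSpace ℝ E] [FiniteDimensional ℝ E]
    [NormedAddCommGroup V] [InnerProductSpace ℝ V] [FiniteDimensional ℝ V]
    (A : E →L[ℝ] V) (σ : ℝ) (hσ : 0 < σ)
    (f : E → ℝ) (hf : StrongConvexOn Set.univ σ f)
    (g : V → ℝ) (hg : ConvexOn ℝ Set.univ g)
    -- x(y) : the unique maximizer of x ↦ ⟨Aᵀy, x⟩ − f(x)
    (xv : V → E)
    (hxv : ∀ y, IsMaxOn (fun x => ⟪(ContinuousLinearMap.adjoint A) y, x⟫ - f x) Set.univ (xv y))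
    -- q : the dual function q(y) = inf_{x,z} { f(x) + g(z) − ⟨y, Ax − z⟩ }
    (q : V → ℝ)
    (hq : ∀ y, IsGLB {r : ℝ | ∃ x z, r = f x + g z - ⟪y, A x - z⟫} (q y))
    -- v_L(y) : the unique minimizer of z ↦ L·g(z) + (1/2)‖z − (A x(y) − L y)‖²
    (v : ℝ → V → V)
    (hv : ∀ L, 0 < L → ∀ y,
      IsMinOn (fun z => L * g z + (1/2) * ‖z - (A (xv y) - L • y)‖^2) Set.univ (v L y))
    -- p_L(y) := y − (1/L)(A x(y) − v_L(y))
    (p : ℝ → V → V)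
    (hp : ∀ L y, p L y = y - (1/L) • (A (xv y) - v L y))
    (y : V) (L : ℝ) (hL : 0 < L) :
    f (xv (p L y)) + g (v L y) - q (p L y)
      ≤ (L + ‖A‖^2 / σ) * ‖p L y‖ * ‖p L y - y‖ := by
  have h1 : A (xv y) - v L y = L • (y - p L y) := by
    rw [hp L y, sub_sub_cancel, smul_smul, mul_one_div, div_self hL.ne', one_smul]
  have hu : v L y - (A (xv y) - L • y) = L • p L y := by
    rw [hp L y, smul_sub, smul_smul, mul_one_div, div_self hL.ne', one_smul]
    abel
  -- Step A : v L y minimizes z ↦ g z + ⟪p L y, z⟫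
  have hgopt : ∀ z, g (v L y) + ⟪p L y, v L y⟫ ≤ g z + ⟪p L y, z⟫ := by
    intro z
    have := prox_opt_pd hL hg (A (xv y) - L • y) (hv L hL y) z
    rw [hu, real_inner_smul_left, inner_sub_right] at this
    rw [← sub_nonneg] at this
    have hX : 0 ≤ g z + (⟪p L y, z⟫ - ⟪p L y, v L y⟫) - g (v L y) := by nlinarith [this]
    linarith
  -- f-optimality at a point w
  have hfopt : ∀ w x, f (xv w) - ⟪w, A (xv w)⟫ + σ/2 * ‖xv w - x‖^2 ≤ f x - ⟪w, A x⟫ := by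
    intro w x
    have := sc_growth_pd hf ((ContinuousLinearMap.adjoint A) w) (hxv w) x
    rwa [ContinuousLinearMap.adjoint_inner_left, ContinuousLinearMap.adjoint_inner_left] at this
  -- Step C : Lipschitz bound on xv
  have hDelta : ‖xv (p L y) - xv y‖ ≤ ‖A‖/σ * ‖p L y - y‖ := by
    have hy := hfopt y (xv (p L y))
    have hP := hfopt (p L y) (xv y)
    have hns : ‖xv y - xv (p L y)‖ = ‖xv (p L y) - xv y‖ := norm_sub_rev _ _
    rw [hns] at hy
    have hmono : σ * ‖xv (p L y) - xv y‖^2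
        ≤ ⟪p L y - y, A (xv (p L y)) - A (xv y)⟫ := by
      rw [inner_sub_left, inner_sub_right, inner_sub_right]
      linarith
    rw [← map_sub] at hmono
    have hcs : ⟪p L y - y, A (xv (p L y) - xv y)⟫
        ≤ ‖p L y - y‖ * (‖A‖ * ‖xv (p L y) - xv y‖) := by
      calc ⟪p L y - y, A (xv (p L y) - xv y)⟫
          ≤ ‖p L y - y‖ * ‖A (xv (p L y) - xv y)‖ := real_inner_le_norm _ _
        _ ≤ ‖p L y - y‖ * (‖A‖ * ‖xv (p L y) - xv y‖) := by
            gcongr; exact A.le_opNorm _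
    rcases (norm_nonneg (xv (p L y) - xv y)).eq_or_lt with h0 | h0
    · rw [← h0]; positivity
    · have hσa : σ * ‖xv (p L y) - xv y‖ ≤ ‖A‖ * ‖p L y - y‖ := by nlinarith
      rw [div_mul_eq_mul_div, le_div_iff₀ hσ]
      linarith
  -- Step D : lower bound on q (p L y)
  have hqlb : f (xv (p L y)) + g (v L y) - ⟪p L y, A (xv (p L y)) - v L y⟫ ≤ q (p L y) := by
    apply (hq (p L y)).2
    rintro r ⟨x, z, rfl⟩
    have hfx := (hxv (p L y)) (Set.mem_univ x)
    simp only [Set.mem_setOf_eq, ContinuousLinearMap.adjoint_inner_left] at hfx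
    have hgz := hgopt z
    rw [inner_sub_right, inner_sub_right]
    linarith
  -- Step E : combine
  have hsplit : ⟪p L y, A (xv (p L y)) - v L y⟫
      = ⟪p L y, A (xv (p L y)) - A (xv y)⟫ + L * ⟪p L y, y - p L y⟫ := by
    have : A (xv (p L y)) - v L y
        = (A (xv (p L y)) - A (xv y)) + (A (xv y) - v L y) := by abel
    rw [this, inner_add_right, h1, real_inner_smul_right]
  have b1 : ⟪p L y, A (xv (p L y)) - A (xv y)⟫
      ≤ ‖p L y‖ * (‖A‖ * ‖xv (p L y) - xv y‖) := by
    rw [← map_sub]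
    calc ⟪p L y, A (xv (p L y) - xv y)⟫
        ≤ ‖p L y‖ * ‖A (xv (p L y) - xv y)‖ := real_inner_le_norm _ _
      _ ≤ ‖p L y‖ * (‖A‖ * ‖xv (p L y) - xv y‖) := by gcongr; exact A.le_opNorm _
  have b2 : ⟪p L y, y - p L y⟫ ≤ ‖p L y‖ * ‖p L y - y‖ := by
    calc ⟪p L y, y - p L y⟫ ≤ ‖p L y‖ * ‖y - p L y‖ := real_inner_le_norm _ _
      _ = ‖p L y‖ * ‖p L y - y‖ := by rw [norm_sub_rev]
  have hb1' : ‖p L y‖ * (‖A‖ * ‖xv (p L y) - xv y‖)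
      ≤ ‖p L y‖ * (‖A‖ * (‖A‖/σ * ‖p L y - y‖)) := by
    have h := mul_le_mul_of_nonneg_left hDelta (norm_nonneg A)
    exact mul_le_mul_of_nonneg_left h (norm_nonneg _)
  have hfinal : (L + ‖A‖^2 / σ) * ‖p L y‖ * ‖p L y - y‖
      = ‖p L y‖ * (‖A‖ * (‖A‖/σ * ‖p L y - y‖)) + L * (‖p L y‖ * ‖p L y - y‖) := by
    field_simp
    ring
  have hLb2 := mul_le_mul_of_nonneg_left b2 hL.le
  linarith
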